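/- arXiv:2007.10194 — 2 statements merged into one kernel-verified Lean document; each statement's English description precedes it below -/
import Mathlib

section
/- Let f : ℝ≥0 → ℝ≥0 be a non-increasing, right-continuous function with lim_{s→∞} f(s) = 0, and let η : ℝ≥0 → ℝ≥0 be non-decreasing with ∫₀¹ η(t)/t dt < ∞. Suppose that for all t ∈ [0,1] and all s > 0 one has t·f(s+t) ≤ f(s)·η(f(s)). If s₀ ≥ 0 satisfies η(f(s₀)) ≤ 1/e, then f(s) = 0 for every s ≥ s₀ + e·∫₀^{e·f(s₀)} η(t)/t dt. -/
open MeasureTheory Set Filter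

lemma myIntOn (η : ℝ → ℝ) (hη0 : ∀ t, 0 ≤ η t) (hηmono : MonotoneOn η (Ici 0))
    (hDini : IntegrableOn (fun t => η t / t) (Ioc (0:ℝ) 1)) (M : ℝ) :
    IntegrableOn (fun t => η t / t) (Ioc (0:ℝ) M) := by
  rcases le_or_gt M 1 with h | h
  · exact hDini.mono_set (Ioc_subset_Ioc le_rfl h)
  · have h2 : IntegrableOn (fun t => η t / t) (Ioc (1:ℝ) M) := by
      have hmeas : AEMeasurable (fun t => η t / t) (volume.restrict (Ioc (1:ℝ) M)) := by
        have h1 : AEMeasurable η (volume.restrict (Ioc (1:ℝ) M)) :=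
          aemeasurable_restrict_of_monotoneOn measurableSet_Ioc
            (hηmono.mono (fun x hx => le_trans zero_le_one hx.1.le))
        exact h1.div aemeasurable_id
      have hconst : IntegrableOn (fun _ : ℝ => η M) (Ioc (1:ℝ) M) := by
        apply integrableOn_const measure_Ioc_lt_top.ne
      refine Integrable.mono' hconst hmeas.aestronglyMeasurable ?_
      refine (ae_restrict_iff' measurableSet_Ioc).2 (ae_of_all _ fun t ht => ?_)
      have ht0 : (0:ℝ) < t := lt_trans one_pos ht.1
      have h1 : η t / t ≤ η t := div_le_self (hη0 t) ht.1.le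
      have h2 : η t ≤ η M := hηmono ht0.le (le_trans ht0.le ht.2) ht.2
      rw [Real.norm_eq_abs, abs_of_nonneg (div_nonneg (hη0 t) ht0.le)]
      linarith
    rw [← Ioc_union_Ioc_eq_Ioc zero_le_one h.le]
    exact hDini.union h2

lemma myTerm (η : ℝ → ℝ) (hη0 : ∀ t, 0 ≤ η t) (hηmono : MonotoneOn η (Ici 0))
    (hDini : IntegrableOn (fun t => η t / t) (Ioc (0:ℝ) 1)) (x : ℝ) (hx : 0 < x) :
    η x ≤ ∫ t in Ioc x (Real.exp 1 * x), η t / t := by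
  set E := Real.exp 1 with hE
  have hE1 : (1:ℝ) < E := by
    have := Real.add_one_le_exp 1; rw [← hE] at this; linarith
  have hxE : x ≤ E * x := le_mul_of_one_le_left hx.le hE1.le
  have hEx : 0 < E * x := by positivity
  have hinv : IntegrableOn (fun t : ℝ => η x * t⁻¹) (Ioc x (E * x)) := by
    apply (ContinuousOn.integrableOn_Icc ?_).mono_set Ioc_subset_Icc_self
    exact continuousOn_const.mul (continuousOn_inv₀.mono
      (fun t ht => ne_of_gt (lt_of_lt_of_le hx ht.1)))
  have hrhs : IntegrableOn (fun t => η t / t) (Ioc x (E * x)) :=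
    (myIntOn η hη0 hηmono hDini (E * x)).mono_set (Ioc_subset_Ioc hx.le le_rfl)
  have hval : ∫ t in Ioc x (E * x), η x * t⁻¹ = η x := by
    rw [← intervalIntegral.integral_of_le hxE, intervalIntegral.integral_const_mul,
      integral_inv (notMem_uIcc_of_lt hx hEx), mul_div_assoc,
      div_self hx.ne', mul_one, Real.log_exp, mul_one]
  calc η x = ∫ t in Ioc x (E * x), η x * t⁻¹ := hval.symm
    _ ≤ ∫ t in Ioc x (E * x), η t / t := by
        refine setIntegral_mono_on hinv hrhs measurableSet_Ioc fun t ht => ?_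
        have ht0 : 0 < t := lt_trans hx ht.1
        rw [div_eq_mul_inv]
        exact mul_le_mul_of_nonneg_right
          (hηmono hx.le ht0.le ht.1.le) (inv_nonneg.2 ht0.le)

lemma mySplit (η : ℝ → ℝ) (hη0 : ∀ t, 0 ≤ η t) (hηmono : MonotoneOn η (Ici 0))
    (hDini : IntegrableOn (fun t => η t / t) (Ioc (0:ℝ) 1)) (x : ℝ) (hx : 0 < x) :
    ∫ t in Ioc (0:ℝ) (Real.exp 1 * x), η t / t
      = (∫ t in Ioc (0:ℝ) x, η t / t) + ∫ t in Ioc x (Real.exp 1 * x), η t / t := by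
  have hE1 : (1:ℝ) < Real.exp 1 := by
    have := Real.add_one_le_exp 1; linarith
  have hxE : x ≤ Real.exp 1 * x := le_mul_of_one_le_left hx.le hE1.le
  rw [← Ioc_union_Ioc_eq_Ioc hx.le hxE]
  exact setIntegral_union (Ioc_disjoint_Ioc_of_le le_rfl) measurableSet_Ioc
    ((myIntOn η hη0 hηmono hDini x))
    ((myIntOn η hη0 hηmono hDini (Real.exp 1 * x)).mono_set (Ioc_subset_Ioc hx.le le_rfl))

lemma myKey (f η : ℝ → ℝ)
    (hf0 : ∀ s, 0 ≤ f s) (hη0 : ∀ t, 0 ≤ η t)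
    (hfmono : AntitoneOn f (Ici 0))
    (hηmono : MonotoneOn η (Ici 0))
    (hDini : IntegrableOn (fun t => η t / t) (Ioc (0:ℝ) 1))
    (hineq : ∀ t ∈ Icc (0:ℝ) 1, ∀ s > (0:ℝ), t * f (s + t) ≤ f s * η (f s))
    (a : ℝ) (ha : 0 < a) (hηa : η (f a) ≤ 1 / Real.exp 1) :
    ∀ s, a + Real.exp 1 * (∫ t in Ioc (0:ℝ) (Real.exp 1 * f a), η t / t) < s → f s = 0 := by
  intro s hs
  set E := Real.exp 1 with hE
  have hE1 : (1:ℝ) < E := by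
    have := Real.add_one_le_exp 1; rw [← hE] at this; linarith
  have hEpos : (0:ℝ) < E := lt_trans one_pos hE1
  have hInonneg : ∀ M : ℝ, 0 ≤ ∫ t in Ioc (0:ℝ) M, η t / t := fun M =>
    setIntegral_nonneg measurableSet_Ioc (fun t ht => div_nonneg (hη0 t) ht.1.le)
  rcases eq_or_lt_of_le (hf0 a) with h0 | hc
  · -- f a = 0
    have has : a < s :=
      lt_of_le_of_lt (le_add_of_nonneg_right (mul_nonneg hEpos.le (hInonneg (E * f a)))) hs
    have h1 : f s ≤ f a := hfmono ha.le (le_trans ha.le has.le) has.le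
    have := hf0 s
    rw [← h0] at h1
    linarith
  · -- 0 < f a
    set c := f a with hcdef
    set cn : ℕ → ℝ := fun n => c / E ^ n with hcn
    have hcn_pos : ∀ n, 0 < cn n := fun n => div_pos hc (pow_pos hEpos n)
    have hcn_le : ∀ n, cn n ≤ c := fun n =>
      div_le_self hc.le (one_le_pow₀ hE1.le)
    have hηcn : ∀ n, η (cn n) ≤ 1 / E := fun n =>
      le_trans (hηmono (hcn_pos n).le hc.le (hcn_le n)) hηa
    have hcn_succ : ∀ n, E * cn (n + 1) = cn n := by
      intro n
      rw [hcn]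
      simp only []
      rw [pow_succ]
      field_simp
    have hcn_succ' : ∀ n, cn (n + 1) = cn n / E := by
      intro n
      rw [eq_div_iff hEpos.ne', mul_comm]
      exact hcn_succ n
    set σ : ℕ → ℝ := fun n => Nat.rec (motive := fun _ => ℝ) a
      (fun k x => x + E * η (cn k)) n with hσ
    have hσ_succ : ∀ n, σ (n + 1) = σ n + E * η (cn n) := fun n => rfl
    have hσ_ge : ∀ n, a ≤ σ n := by
      intro n; induction n with
      | zero => exact le_rfl
      | succ k ih =>
        rw [hσ_succ]
        have : 0 ≤ E * η (cn k) := mul_nonneg hEpos.le (hη0 _)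
        linarith
    have hσ_pos : ∀ n, 0 < σ n := fun n => lt_of_lt_of_le ha (hσ_ge n)
    -- telescoping bound
    set S : ℝ := a + E * ∫ t in Ioc (0:ℝ) (E * c), η t / t with hS
    have hσ0 : σ 0 = a := rfl
    clear_value E c cn σ S
    have hσ_bound : ∀ n, σ n + E * (∫ t in Ioc (0:ℝ) (E * cn n), η t / t) ≤ S := by
      intro n; induction n with
      | zero =>
        have h1 : cn 0 = c := by rw [hcn]; simp
        rw [h1, hσ0, hS]
      | succ k ih =>
        have hsplit := mySplit η hη0 hηmono hDini (cn k) (hcn_pos k)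
        have hterm := myTerm η hη0 hηmono hDini (cn k) (hcn_pos k)
        rw [← hE] at hsplit hterm
        rw [hσ_succ, hcn_succ k]
        have : σ k + E * η (cn k) + E * (∫ t in Ioc (0:ℝ) (cn k), η t / t)
            ≤ σ k + E * (∫ t in Ioc (0:ℝ) (E * cn k), η t / t) := by
          rw [hsplit]; nlinarith
        linarith
    have hσ_le_S : ∀ n, σ n ≤ S := by
      intro n
      have := hσ_bound n
      have h2 := hInonneg (E * cn n)
      have h3 := mul_nonneg hEpos.le h2
      linarith
    -- main induction
    have H2 : ∀ n, f (σ n) ≤ cn n ∨ ∀ u, σ n < u → f u = 0 := by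
      intro n; induction n with
      | zero =>
        left
        have h1 : cn 0 = c := by rw [hcn]; simp
        rw [h1, hσ0, hcdef]
      | succ k ih =>
        rcases ih with hfk | hzero
        · rcases eq_or_lt_of_le (hη0 (cn k)) with hz | hpos
          · -- η (cn k) = 0 : f vanishes beyond σ k
            right
            have hηf : η (f (σ k)) = 0 := by
              have h1 : η (f (σ k)) ≤ η (cn k) :=
                hηmono (hf0 _) (hcn_pos k).le hfk
              have h2 := hη0 (f (σ k))
              rw [← hz] at h1
              linarith
            have hvanish : ∀ t ∈ Ioc (0:ℝ) 1, f (σ k + t) = 0 := by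
              intro t ht
              have := hineq t ⟨ht.1.le, ht.2⟩ (σ k) (hσ_pos k)
              rw [hηf, mul_zero] at this
              have := hf0 (σ k + t)
              nlinarith [ht.1]
            intro u hu
            have hσeq : σ (k + 1) = σ k := by
              rw [hσ_succ, ← hz, mul_zero, add_zero]
            rw [hσeq] at hu
            rcases le_or_gt u (σ k + 1) with hcase | hcase
            · have := hvanish (u - σ k) ⟨by linarith, by linarith⟩
              simpa using this
            · have h1 : f u ≤ f (σ k + 1) := by
                refine hfmono ?_ ?_ hcase.le
                · simp only [mem_Ici]; linarith [hσ_pos k]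
                · simp only [mem_Ici]; linarith [hσ_pos k]
              have h2 := hvanish 1 ⟨one_pos, le_rfl⟩
              have := hf0 u
              rw [h2] at h1
              linarith
          · -- η (cn k) > 0
            left
            set t := E * η (cn k) with htdef
            have ht0 : 0 < t := mul_pos hEpos hpos
            have ht1 : t ≤ 1 := by
              have := hηcn k
              calc t ≤ E * (1 / E) := mul_le_mul_of_nonneg_left this hEpos.le
                _ = 1 := by field_simp
            have hkey := hineq t ⟨ht0.le, ht1⟩ (σ k) (hσ_pos k)
            have hbound : f (σ k) * η (f (σ k)) ≤ cn k * η (cn k) := by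
              have h1 : η (f (σ k)) ≤ η (cn k) := hηmono (hf0 _) (hcn_pos k).le hfk
              nlinarith [hf0 (σ k), hη0 (f (σ k))]
            have hfs := hf0 (σ k + t)
            have : f (σ k + t) ≤ cn k / E := by
              rw [le_div_iff₀ hEpos]
              nlinarith
            rw [hσ_succ, hcn_succ' k]
            exact this
        · right
          intro u hu
          refine hzero u (lt_of_le_of_lt ?_ hu)
          rw [hσ_succ]
          nlinarith [hη0 (cn k), hEpos]
    -- conclude
    have hsn : ∀ n, f s ≤ cn n := by
      intro n
      rcases H2 n with h1 | h2
      · have : f s ≤ f (σ n) :=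
          hfmono (hσ_pos n).le (le_trans (hσ_pos n).le (le_trans (hσ_le_S n) hs.le))
            (le_trans (hσ_le_S n) hs.le)
        linarith
      · rw [h2 s (lt_of_le_of_lt (hσ_le_S n) hs)]
        exact (hcn_pos n).le
    have hlim : Tendsto cn atTop (nhds 0) := by
      have : cn = fun n => c * (E⁻¹) ^ n := by
        funext n; rw [hcn]; simp [div_eq_mul_inv, inv_pow]
      rw [this]
      simpa using (tendsto_pow_atTop_nhds_zero_of_lt_one
        (by positivity) (inv_lt_one_of_one_lt₀ hE1)).const_mul c
    have hle0 : f s ≤ 0 := ge_of_tendsto' hlim hsn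
    exact le_antisymm hle0 (hf0 s)

/-- Iteration lemma (Lemma 3.3 of the paper): if `f` is nonnegative, non-increasing,
right-continuous, tends to `0` at infinity, `η` is a nonnegative non-decreasing function
satisfying the Dini condition, and `t * f (s + t) ≤ f s * η (f s)` for all `t ∈ [0,1]`,
`s > 0`, then `f` vanishes beyond `s₀ + e * ∫₀^{e f(s₀)} η(t)/t dt` whenever
`η (f s₀) ≤ 1/e`. -/
theorem stmt0 (f η : ℝ → ℝ)
    (hf0 : ∀ s, 0 ≤ f s) (hη0 : ∀ t, 0 ≤ η t)
    (hfmono : AntitoneOn f (Ici 0))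
    (hfrc : ∀ s ∈ Ici (0:ℝ), ContinuousWithinAt f (Ici s) s)
    (hflim : Tendsto f atTop (nhds 0))
    (hηmono : MonotoneOn η (Ici 0))
    (hDini : IntegrableOn (fun t => η t / t) (Ioc (0:ℝ) 1))
    (hineq : ∀ t ∈ Icc (0:ℝ) 1, ∀ s > (0:ℝ), t * f (s + t) ≤ f s * η (f s))
    (s₀ : ℝ) (hs₀ : 0 ≤ s₀) (hη : η (f s₀) ≤ 1 / Real.exp 1) :
    ∀ s, s₀ + Real.exp 1 * (∫ t in Ioc (0:ℝ) (Real.exp 1 * f s₀), η t / t) ≤ s →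
      f s = 0 := by
  set E := Real.exp 1 with hE
  have hE1 : (1:ℝ) < E := by
    have := Real.add_one_le_exp 1; rw [← hE] at this; linarith
  have hEpos : (0:ℝ) < E := lt_trans one_pos hE1
  set I : ℝ := ∫ t in Ioc (0:ℝ) (E * f s₀), η t / t with hI
  have hI0 : 0 ≤ I :=
    setIntegral_nonneg measurableSet_Ioc (fun t ht => div_nonneg (hη0 t) ht.1.le)
  clear_value I
  -- strict version
  have hgt : ∀ u, s₀ + E * I < u → f u = 0 := by
    intro u hu
    set δ : ℝ := (u - (s₀ + E * I)) / 2 with hδdef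
    clear_value δ
    have hδ : 0 < δ := by rw [hδdef]; linarith
    set a : ℝ := s₀ + δ with hadef
    clear_value a
    have ha : 0 < a := by rw [hadef]; linarith
    have hfa : f a ≤ f s₀ :=
      hfmono (mem_Ici.2 hs₀) (mem_Ici.2 ha.le) (by rw [hadef]; linarith)
    have hηfa : η (f a) ≤ 1 / E := le_trans (hηmono (hf0 a) (hf0 s₀) hfa) hη
    have hIa : (∫ t in Ioc (0:ℝ) (E * f a), η t / t) ≤ I := by
      rw [hI]
      refine setIntegral_mono_set (myIntOn η hη0 hηmono hDini (E * f s₀)) ?_ ?_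
      · exact (ae_restrict_iff' measurableSet_Ioc).2
          (ae_of_all _ fun t ht => div_nonneg (hη0 t) ht.1.le)
      · exact HasSubset.Subset.eventuallyLE
          (Ioc_subset_Ioc le_rfl (mul_le_mul_of_nonneg_left hfa hEpos.le))
    refine myKey f η hf0 hη0 hfmono hηmono hDini hineq a ha hηfa u ?_
    have hfin : a + E * (∫ t in Ioc (0:ℝ) (E * f a), η t / t) ≤ a + E * I := by
      linarith [mul_le_mul_of_nonneg_left hIa hEpos.le]
    linarith
  intro s hs
  rcases lt_or_eq_of_le hs with hlt | heq
  · exact hgt s hlt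
  · -- s = s₀ + E * I : use right continuity
    have hs0 : (0:ℝ) ≤ s := by
      rw [← heq]
      have := mul_nonneg hEpos.le hI0
      linarith
    have h1 : Tendsto f (nhdsWithin s (Ioi s)) (nhds (f s)) :=
      (hfrc s hs0).mono_left (nhdsWithin_mono s Ioi_subset_Ici_self)
    have h2 : Tendsto f (nhdsWithin s (Ioi s)) (nhds 0) := by
      have hev : ∀ᶠ u in nhdsWithin s (Ioi s), f u = 0 :=
        eventually_nhdsWithin_of_forall (fun u hu => hgt u (by rw [heq]; exact hu))
      exact Tendsto.congr' (Filter.EventuallyEq.symm hev) tendsto_const_nhds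
    exact tendsto_nhds_unique h1 h2
end

section
/- Under the hypotheses of the previous iteration lemma, if moreover η(f(0)) ≤ 1/e, then f(s) = 0 for all s ≥ e·∫₀^{e·f(0)} η(t)/t dt. -/
open MeasureTheory Set Filter


lemma aux_e1 : (1:ℝ) < Real.exp 1 := by
  have := Real.add_one_le_exp 1; linarith

lemma aux_int (η : ℝ → ℝ) (M : ℝ) (hη0 : ∀ t, 0 ≤ η t)
    (hηmono : MonotoneOn η (Ici 0))
    (hDini : IntegrableOn (fun t => η t / t) (Ioc (0:ℝ) 1)) :
    IntegrableOn (fun t => η t / t) (Ioc (0:ℝ) M) := by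
  rcases le_or_gt M 1 with hM | hM
  · exact hDini.mono_set (Ioc_subset_Ioc_right hM)
  · have hsub : Ioc (0:ℝ) M = Ioc 0 1 ∪ Ioc 1 M := (Ioc_union_Ioc_eq_Ioc zero_le_one hM.le).symm
    rw [hsub]
    refine IntegrableOn.union hDini ?_
    have hmeas : AEMeasurable (fun t => η t / t) (volume.restrict (Ioc (1:ℝ) M)) := by
      refine AEMeasurable.div ?_ aemeasurable_id
      exact aemeasurable_restrict_of_monotoneOn measurableSet_Ioc
        (hηmono.mono (fun x hx => le_trans zero_le_one hx.1.le))
    refine Integrable.mono' (g := fun _ => η M) ?_ hmeas.aestronglyMeasurable ?_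
    · exact integrableOn_const measure_Ioc_lt_top.ne
    · rw [ae_restrict_iff' measurableSet_Ioc]
      refine ae_of_all _ fun t ht => ?_
      have ht0 : (0:ℝ) < t := lt_trans zero_lt_one ht.1
      have h1 : η t / t ≤ η t := div_le_self (hη0 t) ht.1.le
      have h2 : η t ≤ η M := hηmono (le_trans zero_le_one ht.1.le) (le_trans zero_le_one (ht.1.le.trans ht.2)) ht.2
      rw [Real.norm_eq_abs, abs_of_nonneg (div_nonneg (hη0 t) ht0.le)]
      linarith

lemma aux_step (η : ℝ → ℝ) (hη0 : ∀ t, 0 ≤ η t) (hηmono : MonotoneOn η (Ici 0))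
    (a : ℝ) (ha : 0 < a)
    (hint : IntegrableOn (fun t => η t / t) (Ioc a (Real.exp 1 * a))) :
    η a ≤ ∫ t in Ioc a (Real.exp 1 * a), η t / t := by
  have hae : a ≤ Real.exp 1 * a := le_mul_of_one_le_left ha.le aux_e1.le
  have hconst : IntegrableOn (fun t => η a / t) (Ioc a (Real.exp 1 * a)) := by
    refine (ContinuousOn.integrableOn_Icc ?_).mono_set Ioc_subset_Icc_self
    exact continuousOn_const.div continuousOn_id (fun x hx => ne_of_gt (lt_of_lt_of_le ha hx.1))
  have h1 : ∫ t in Ioc a (Real.exp 1 * a), η a / t = η a := by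
    rw [← intervalIntegral.integral_of_le hae]
    simp_rw [div_eq_mul_inv]
    rw [intervalIntegral.integral_const_mul,
      integral_inv (Set.notMem_uIcc_of_lt ha (by nlinarith [aux_e1]))]
    rw [mul_div_assoc, div_self ha.ne', mul_one, Real.log_exp, mul_one]
  calc η a = ∫ t in Ioc a (Real.exp 1 * a), η a / t := h1.symm
    _ ≤ ∫ t in Ioc a (Real.exp 1 * a), η t / t := by
        refine setIntegral_mono_on hconst hint measurableSet_Ioc fun t ht => ?_
        have ht0 : 0 < t := lt_of_lt_of_le ha ht.1.le
        have hat : η a ≤ η t := hηmono ha.le (ha.le.trans ht.1.le) ht.1.le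
        gcongr


lemma aux_sum (η : ℝ → ℝ) (hη0 : ∀ t, 0 ≤ η t) (hηmono : MonotoneOn η (Ici 0))
    (c : ℝ) (hc : 0 < c)
    (hint : IntegrableOn (fun t => η t / t) (Ioc (0:ℝ) (Real.exp 1 * c))) :
    ∀ n, ∑ k ∈ Finset.range n, η (c * (Real.exp 1)⁻¹ ^ k)
      ≤ ∫ t in Ioc (0:ℝ) (Real.exp 1 * c), η t / t := by
  have he0 : (0:ℝ) < Real.exp 1 := Real.exp_pos 1
  have hr0 : (0:ℝ) < (Real.exp 1)⁻¹ := inv_pos.mpr he0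
  have hr1 : (Real.exp 1)⁻¹ ≤ 1 := by
    rw [inv_le_one_iff₀]; right; exact aux_e1.le
  have her : Real.exp 1 * (Real.exp 1)⁻¹ = 1 := mul_inv_cancel₀ he0.ne'
  have ha_pos : ∀ n : ℕ, 0 < c * (Real.exp 1)⁻¹ ^ n :=
    fun n => mul_pos hc (pow_pos hr0 n)
  have ha_le : ∀ n : ℕ, c * (Real.exp 1)⁻¹ ^ n ≤ c := fun n => by
    nlinarith [pow_le_one₀ hr0.le hr1 (n := n), (ha_pos n).le, pow_pos hr0 n]
  have key : ∀ n, ∑ k ∈ Finset.range n, η (c * (Real.exp 1)⁻¹ ^ k)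
      ≤ ∫ t in Ioc (Real.exp 1 * (c * (Real.exp 1)⁻¹ ^ n)) (Real.exp 1 * c), η t / t := by
    intro n
    induction n with
    | zero => simp
    | succ n ih =>
      have hshift : Real.exp 1 * (c * (Real.exp 1)⁻¹ ^ (n+1)) = c * (Real.exp 1)⁻¹ ^ n := by
        linear_combination c * (Real.exp 1)⁻¹ ^ n * her
      set a := c * (Real.exp 1)⁻¹ ^ n with ha_def
      have ha : 0 < a := ha_pos n
      have haec : Real.exp 1 * a ≤ Real.exp 1 * c := by
        have := ha_le n; nlinarith
      have h1 : IntegrableOn (fun t => η t / t) (Ioc a (Real.exp 1 * a)) :=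
        hint.mono_set (Ioc_subset_Ioc ha.le haec)
      have h2 : IntegrableOn (fun t => η t / t) (Ioc (Real.exp 1 * a) (Real.exp 1 * c)) :=
        hint.mono_set (Ioc_subset_Ioc (by positivity) le_rfl)
      have hunion : ∫ t in Ioc a (Real.exp 1 * c), η t / t
          = (∫ t in Ioc a (Real.exp 1 * a), η t / t)
            + ∫ t in Ioc (Real.exp 1 * a) (Real.exp 1 * c), η t / t := by
        rw [← setIntegral_union (Set.Ioc_disjoint_Ioc_of_le le_rfl) measurableSet_Ioc h1 h2,
          Ioc_union_Ioc_eq_Ioc (le_mul_of_one_le_left ha.le aux_e1.le) haec]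
      rw [Finset.sum_range_succ, hshift]
      have hstep := aux_step η hη0 hηmono a ha h1
      rw [hunion]
      linarith [ih]
  intro n
  refine (key n).trans ?_
  refine setIntegral_mono_set hint ?_ ?_
  · rw [EventuallyLE]
    refine (ae_restrict_iff' measurableSet_Ioc).mpr (ae_of_all _ fun t ht => ?_)
    exact div_nonneg (hη0 t) (le_of_lt ht.1)
  · exact HasSubset.Subset.eventuallyLE (Ioc_subset_Ioc (by positivity) le_rfl)

/-- Remark 3.4(1): under the hypotheses of the iteration lemma, if moreover
`η (f 0) ≤ 1/e`, then `f s = 0` for all `s ≥ e * ∫₀^{e f(0)} η(t)/t dt`. -/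
theorem stmt1 (f η : ℝ → ℝ)
    (hf0 : ∀ s, 0 ≤ f s) (hη0 : ∀ t, 0 ≤ η t)
    (hfmono : AntitoneOn f (Ici 0))
    (hfrc : ∀ s ∈ Ici (0:ℝ), ContinuousWithinAt f (Ici s) s)
    (hflim : Tendsto f atTop (nhds 0))
    (hηmono : MonotoneOn η (Ici 0))
    (hDini : IntegrableOn (fun t => η t / t) (Ioc (0:ℝ) 1))
    (hineq : ∀ t ∈ Icc (0:ℝ) 1, ∀ s > (0:ℝ), t * f (s + t) ≤ f s * η (f s))
    (hη : η (f 0) ≤ 1 / Real.exp 1) :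
    ∀ s, Real.exp 1 * (∫ t in Ioc (0:ℝ) (Real.exp 1 * f 0), η t / t) ≤ s →
      f s = 0 := by
  have he0 : (0:ℝ) < Real.exp 1 := Real.exp_pos 1
  have he1 : (1:ℝ) < Real.exp 1 := aux_e1
  set I := ∫ t in Ioc (0:ℝ) (Real.exp 1 * f 0), η t / t with hIdef
  have hint : IntegrableOn (fun t => η t / t) (Ioc (0:ℝ) (Real.exp 1 * f 0)) :=
    aux_int η _ hη0 hηmono hDini
  have hI0 : 0 ≤ I :=
    setIntegral_nonneg measurableSet_Ioc fun t ht => div_nonneg (hη0 t) ht.1.le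
  have heI0 : 0 ≤ Real.exp 1 * I := mul_nonneg he0.le hI0
  have hr0 : (0:ℝ) < (Real.exp 1)⁻¹ := inv_pos.mpr he0
  have hr1 : (Real.exp 1)⁻¹ < 1 := inv_lt_one_of_one_lt₀ he1
  -- Claim A : f vanishes strictly beyond e * I
  have claimA : ∀ s', Real.exp 1 * I < s' → f s' = 0 := by
    intro s' hs'
    have hs'0 : 0 < s' := lt_of_le_of_lt heI0 hs'
    have hfles : f s' ≤ f 0 := hfmono self_mem_Ici (mem_Ici.mpr hs'0.le) hs'0.le
    by_cases hf00 : f 0 = 0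
    · exact le_antisymm (hfles.trans_eq hf00) (hf0 s')
    have hf0pos : 0 < f 0 := lt_of_le_of_ne (hf0 0) (Ne.symm hf00)
    set ε := (s' - Real.exp 1 * I) / 2 with hεdef
    have hεpos : 0 < ε := by rw [hεdef]; linarith
    set r := (Real.exp 1)⁻¹ with hrdef
    have her : Real.exp 1 * r = 1 := mul_inv_cancel₀ he0.ne'
    let S : ℕ → ℝ := fun n => Nat.rec (motive := fun _ => ℝ) ε
      (fun k Sk => Sk + min (Real.exp 1 * η (f Sk) + ε * (2:ℝ)⁻¹ ^ (k+1)) 1) n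
    have hS0 : S 0 = ε := rfl
    have hSsucc : ∀ n, S (n+1)
        = S n + min (Real.exp 1 * η (f (S n)) + ε * (2:ℝ)⁻¹ ^ (n+1)) 1 := fun n => rfl
    have hSge : ∀ n, ε ≤ S n := by
      intro n
      induction n with
      | zero => exact le_rfl
      | succ n ih =>
        rw [hSsucc n]
        have : (0:ℝ) ≤ min (Real.exp 1 * η (f (S n)) + ε * (2:ℝ)⁻¹ ^ (n+1)) 1 :=
          le_min (add_nonneg (mul_nonneg he0.le (hη0 _))
            (mul_nonneg hεpos.le (by positivity))) zero_le_one
        linarith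
    have hSpos : ∀ n, 0 < S n := fun n => lt_of_lt_of_le hεpos (hSge n)
    have hfSle : ∀ n, f (S n) ≤ f 0 :=
      fun n => hfmono self_mem_Ici (mem_Ici.mpr (hSpos n).le) (hSpos n).le
    have hdecay : ∀ n, f (S n) ≤ f 0 * r ^ n := by
      intro n
      induction n with
      | zero => simpa using hfSle 0
      | succ n ih =>
        have hηle : η (f (S n)) ≤ 1 / Real.exp 1 :=
          le_trans (hηmono (hf0 _) (hf0 0) (hfSle n)) hη
        set t := min (Real.exp 1 * η (f (S n)) + ε * (2:ℝ)⁻¹ ^ (n+1)) 1 with htdef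
        have ht0 : 0 < t := lt_min (add_pos_of_nonneg_of_pos (mul_nonneg he0.le (hη0 _))
          (mul_pos hεpos (by positivity))) one_pos
        have ht1 : t ≤ 1 := min_le_right _ _
        have hηt : Real.exp 1 * η (f (S n)) ≤ t := by
          refine le_min (le_add_of_nonneg_right (mul_nonneg hεpos.le (by positivity))) ?_
          rw [mul_comm]
          calc η (f (S n)) * Real.exp 1 ≤ (1 / Real.exp 1) * Real.exp 1 :=
                mul_le_mul_of_nonneg_right hηle he0.le
            _ = 1 := by field_simp
        have hkey := hineq t ⟨ht0.le, ht1⟩ (S n) (hSpos n)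
        have hηtr : η (f (S n)) ≤ t * r := by
          have := mul_le_mul_of_nonneg_right hηt hr0.le
          calc η (f (S n)) = Real.exp 1 * η (f (S n)) * r := by
                rw [mul_comm (Real.exp 1), mul_assoc, her, mul_one]
            _ ≤ t * r := this
        have hchain : t * f (S (n+1)) ≤ t * (f (S n) * r) := by
          rw [hSsucc n]
          calc t * f (S n + t) ≤ f (S n) * η (f (S n)) := hkey
            _ ≤ f (S n) * (t * r) := mul_le_mul_of_nonneg_left hηtr (hf0 _)
            _ = t * (f (S n) * r) := by ring
        have hstep : f (S (n+1)) ≤ f (S n) * r := le_of_mul_le_mul_left hchain ht0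
        calc f (S (n+1)) ≤ f (S n) * r := hstep
          _ ≤ (f 0 * r ^ n) * r := mul_le_mul_of_nonneg_right ih hr0.le
          _ = f 0 * r ^ (n+1) := by ring
    have hbound : ∀ n, S n ≤ ε + ε * (1 - (2:ℝ)⁻¹ ^ n)
        + Real.exp 1 * ∑ k ∈ Finset.range n, η (f 0 * r ^ k) := by
      intro n
      induction n with
      | zero => simp [hS0]
      | succ n ih =>
        have hηle : η (f (S n)) ≤ η (f 0 * r ^ n) :=
          hηmono (mem_Ici.mpr (hf0 _)) (mem_Ici.mpr (by positivity)) (hdecay n)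
        have hmin : min (Real.exp 1 * η (f (S n)) + ε * (2:ℝ)⁻¹ ^ (n+1)) 1
            ≤ Real.exp 1 * η (f 0 * r ^ n) + ε * (2:ℝ)⁻¹ ^ (n+1) := by
          refine (min_le_left _ _).trans ?_
          have := mul_le_mul_of_nonneg_left hηle he0.le
          linarith
        have hpow : ε * (1 - (2:ℝ)⁻¹ ^ n) + ε * (2:ℝ)⁻¹ ^ (n+1)
            = ε * (1 - (2:ℝ)⁻¹ ^ (n+1)) := by rw [pow_succ]; ring
        have hmuladd : Real.exp 1 * (∑ k ∈ Finset.range n, η (f 0 * r ^ k) + η (f 0 * r ^ n))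
            = Real.exp 1 * ∑ k ∈ Finset.range n, η (f 0 * r ^ k)
              + Real.exp 1 * η (f 0 * r ^ n) := mul_add _ _ _
        rw [hSsucc n, Finset.sum_range_succ, hmuladd]
        linarith [ih, hmin, hpow]
    have hsum := aux_sum η hη0 hηmono (f 0) hf0pos hint
    have hSle : ∀ n, S n ≤ s' := by
      intro n
      have h1 := hbound n
      have h2 := hsum n
      have hpow1 : (0:ℝ) ≤ (2:ℝ)⁻¹ ^ n := by positivity
      have hpos2 : ε * (1 - (2:ℝ)⁻¹ ^ n) ≤ ε := by nlinarith
      have h3 : Real.exp 1 * ∑ k ∈ Finset.range n, η (f 0 * r ^ k) ≤ Real.exp 1 * I :=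
        mul_le_mul_of_nonneg_left h2 he0.le
      have hs'eq : s' = 2 * ε + Real.exp 1 * I := by rw [hεdef]; ring
      linarith
    have hfs' : ∀ n, f s' ≤ f 0 * r ^ n := fun n =>
      le_trans (hfmono (mem_Ici.mpr (hSpos n).le) (mem_Ici.mpr hs'0.le) (hSle n)) (hdecay n)
    have htend : Tendsto (fun n : ℕ => f 0 * r ^ n) atTop (nhds 0) := by
      have := (tendsto_pow_atTop_nhds_zero_of_lt_one hr0.le hr1).const_mul (f 0)
      simpa using this
    have : f s' ≤ 0 := ge_of_tendsto' htend hfs'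
    exact le_antisymm this (hf0 s')
  intro s hs
  have hs0 : 0 ≤ s := le_trans heI0 hs
  have t1 : Tendsto f (nhdsWithin s (Ioi s)) (nhds (f s)) :=
    (hfrc s hs0).mono_left (nhdsWithin_mono s Ioi_subset_Ici_self)
  have t2 : Tendsto f (nhdsWithin s (Ioi s)) (nhds 0) := by
    refine Tendsto.congr' ?_ tendsto_const_nhds
    filter_upwards [self_mem_nhdsWithin] with x hx
    exact (claimA x (lt_of_le_of_lt hs hx)).symm
  exact tendsto_nhds_unique t1 t2
end
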